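/- If G is a finite simple graph with at least one edge whose girth is at least 4 (G contains no cycle of length 3), then G is not a universal fixer; that is, there exists a permutation π of V(G) with γ(πG) > γ(G). -/

import Mathlib

open SimpleGraph

variable {V : Type*}

/-- `D` is a dominating set of `G`: every vertex is in `D` or adjacent to a vertex of `D`. -/
def IsDomSet (G : SimpleGraph V) (D : Set V) : Prop :=
  ∀ v : V, ∃ d ∈ D, d = v ∨ G.Adj d v

/-- The domination number of `G`: minimum cardinality of a dominating set. -/
noncomputable def domNum (G : SimpleGraph V) : ℕ :=
  sInf {n | ∃ D : Set V, IsDomSet G D ∧ D.ncard = n}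

/-- The prism `πG` of `G`: two disjoint copies of `G` together with the matching
`{u (π u) : u ∈ V(G)}`, the second copy playing the role of `G'`. -/
def prism (G : SimpleGraph V) (π : Equiv.Perm V) : SimpleGraph (V ⊕ V) where
  Adj a b :=
    match a, b with
    | Sum.inl u, Sum.inl v => G.Adj u v
    | Sum.inr u, Sum.inr v => G.Adj u v
    | Sum.inl u, Sum.inr v => π u = v
    | Sum.inr u, Sum.inl v => π v = u
  symm := ⟨by
    rintro (u | u) (v | v) h
    · exact G.adj_symm h
    · exact h
    · exact h
    · exact G.adj_symm h⟩
  loopless := ⟨by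
    rintro (u | u) h
    · exact G.irrefl h
    · exact G.irrefl h⟩

/-- The closed neighborhood `N[v]` of a vertex. -/
def closedNbhd (G : SimpleGraph V) (v : V) : Set V :=
  insert v (G.neighborSet v)

/-- `x` is a `C₃`-free vertex: non-isolated and belonging to no triangle of `G`. -/
def C3Free (G : SimpleGraph V) (x : V) : Prop :=
  (∃ y, G.Adj x y) ∧ ∀ u v : V, G.Adj x u → G.Adj x v → ¬ G.Adj u v

/-- `A = A1 ∪ A2` is a separable γ-set of `G` (an `A1`-γ-set): `A1, A2` are nonempty,
disjoint, `A` is a γ-set, and `A1` dominates `V(G) - A`. -/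
def SepGammaSet (G : SimpleGraph V) (A1 A2 : Set V) : Prop :=
  A1.Nonempty ∧ A2.Nonempty ∧ Disjoint A1 A2 ∧
  IsDomSet G (A1 ∪ A2) ∧ (A1 ∪ A2).ncard = domNum G ∧
  ∀ v ∉ A1 ∪ A2, ∃ u ∈ A1, G.Adj u v

/-- The separable γ-set `A = A1 ∪ A2` is effective under `π`: `π(A)` is a γ-set of the
copy `G'` of `G` (identified with `G`) whose dominating part is `B2' = π(A2)`,
i.e. `π(A2)` dominates `V(G') - π(A)`. -/
def Effective (G : SimpleGraph V) (π : Equiv.Perm V) (A1 A2 : Set V) : Prop :=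
  IsDomSet G (⇑π '' (A1 ∪ A2)) ∧ (⇑π '' (A1 ∪ A2)).ncard = domNum G ∧
  ∀ v ∉ ⇑π '' (A1 ∪ A2), ∃ u ∈ ⇑π '' A2, G.Adj u v

/-- The star `K_{1,m}` on `Fin (m+1)`, with center `0` adjacent to the `m` leaves. -/
def starGraph (m : ℕ) : SimpleGraph (Fin (m + 1)) where
  Adj a b := (a = 0 ∧ b ≠ 0) ∨ (b = 0 ∧ a ≠ 0)
  symm := ⟨fun a b h => Or.symm h⟩
  loopless := ⟨fun a h => by rcases h with ⟨h1, h2⟩ | ⟨h1, h2⟩ <;> exact h2 h1⟩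

lemma isDomSet_univ' (G : SimpleGraph V) : IsDomSet G Set.univ :=
  fun v => ⟨v, Set.mem_univ v, Or.inl rfl⟩

lemma exists_min_domset (G : SimpleGraph V) :
    ∃ D : Set V, IsDomSet G D ∧ D.ncard = domNum G := by
  have h : {n | ∃ D : Set V, IsDomSet G D ∧ D.ncard = n}.Nonempty :=
    ⟨Set.univ.ncard, Set.univ, isDomSet_univ' G, rfl⟩
  exact Nat.sInf_mem h

lemma domNum_le_ncard (G : SimpleGraph V) {D : Set V} (h : IsDomSet G D) :
    domNum G ≤ D.ncard :=
  Nat.sInf_le ⟨D, h, rfl⟩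

lemma prism_adj_inl_inl (G : SimpleGraph V) (π : Equiv.Perm V) (u v : V) :
    (prism G π).Adj (Sum.inl u) (Sum.inl v) ↔ G.Adj u v := Iff.rfl

lemma prism_adj_inr_inr (G : SimpleGraph V) (π : Equiv.Perm V) (u v : V) :
    (prism G π).Adj (Sum.inr u) (Sum.inr v) ↔ G.Adj u v := Iff.rfl

lemma prism_adj_inl_inr (G : SimpleGraph V) (π : Equiv.Perm V) (u v : V) :
    (prism G π).Adj (Sum.inl u) (Sum.inr v) ↔ π u = v := Iff.rfl

lemma prism_adj_inr_inl (G : SimpleGraph V) (π : Equiv.Perm V) (u v : V) :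
    (prism G π).Adj (Sum.inr u) (Sum.inl v) ↔ π v = u := Iff.rfl

/-- a graph with at least one edge and girth at least 4 (no triangle) is not
a universal fixer. -/
theorem not_universal_fixer_of_girth_ge_four [Fintype V] (G : SimpleGraph V)
    (hedge : ∃ u v : V, G.Adj u v)
    (htriangleFree : ∀ u v w : V, G.Adj u v → G.Adj v w → ¬ G.Adj u w) :
    ∃ π : Equiv.Perm V, domNum G < domNum (prism G π) := by
  classical
  obtain ⟨x, y0, hxy0⟩ := hedge
  -- the list x :: (neighbors of x)
  obtain ⟨y1, ns, hnseq⟩ : ∃ y1 ns, (G.neighborFinset x).toList = y1 :: ns := by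
    cases h : (G.neighborFinset x).toList with
    | nil =>
        exfalso
        have : y0 ∈ (G.neighborFinset x).toList := by
          rw [Finset.mem_toList, SimpleGraph.mem_neighborFinset]; exact hxy0
        rw [h] at this; exact List.not_mem_nil this
    | cons a t => exact ⟨a, t, rfl⟩
  have hmemtl : ∀ a, a ∈ y1 :: ns ↔ G.Adj x a := by
    intro a
    rw [← hnseq, Finset.mem_toList, SimpleGraph.mem_neighborFinset]
  have hxtl : x ∉ y1 :: ns := fun h => G.irrefl ((hmemtl x).mp h)
  have hnodup : (x :: y1 :: ns).Nodup :=
    List.nodup_cons.mpr ⟨hxtl, hnseq ▸ Finset.nodup_toList _⟩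
  set l : List V := x :: y1 :: ns with hldef
  set π : Equiv.Perm V := l.formPerm with hπdef
  -- basic facts about π
  have hπfix : ∀ v, v ∉ l → π v = v := fun v hv => List.formPerm_apply_of_notMem hv
  have hπmem : ∀ v, v ∈ l → π v ∈ l := fun v hv => List.formPerm_apply_mem_of_mem hv
  have hπx : π x = y1 := List.formPerm_apply_head x y1 ns hnodup
  have hxy1 : G.Adj x y1 := (hmemtl y1).mp List.mem_cons_self
  -- the last element of the cycle
  obtain ⟨xm, hxm_tl, hπlast⟩ : ∃ m, m ∈ y1 :: ns ∧ π m = x := by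
    refine ⟨(y1 :: ns).getLast (List.cons_ne_nil _ _), List.getLast_mem _, ?_⟩
    have h := List.formPerm_apply_getLast x (y1 :: ns)
    rwa [List.getLast_cons (List.cons_ne_nil y1 ns)] at h
  have hxxm : G.Adj x xm := (hmemtl xm).mp hxm_tl
  have hπ_eq_x : ∀ a, π a = x → a = xm := fun a h => π.injective (h.trans hπlast.symm)
  have hπ_tl : ∀ a, a ∈ y1 :: ns → a ≠ xm → G.Adj x (π a) := by
    intro a ha hne
    have h1 : π a ∈ l := hπmem a (List.mem_cons_of_mem x ha)
    have h2 : π a ≠ x := fun h => hne (hπ_eq_x a h)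
    rw [hldef, List.mem_cons] at h1
    rcases h1 with h1 | h1
    · exact absurd h1 h2
    · exact (hmemtl _).mp h1
  have horbit : ∀ b ∈ l, ∃ k : ℕ, (π ^ k) x = b := by
    intro b hb
    obtain ⟨i, hi, hbi⟩ := List.getElem_of_mem hb
    refine ⟨i, ?_⟩
    have h2 := List.formPerm_pow_apply_head x (y1 :: ns) hnodup i
    have hmod : i % (x :: y1 :: ns).length = i := Nat.mod_eq_of_lt hi
    simp only [hmod] at h2
    exact h2.trans hbi
  refine ⟨π, ?_⟩
  by_contra hcon
  push_neg at hcon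
  obtain ⟨D, hD, hDcard⟩ := exists_min_domset (prism G π)
  set A1 : Set V := {v | Sum.inl v ∈ D} with hA1def
  set B2 : Set V := {v | Sum.inr v ∈ D} with hB2def
  set A2 : Set V := {v | Sum.inr (π v) ∈ D} with hA2def
  have hB2img : ⇑π '' A2 = B2 := by
    ext w
    constructor
    · rintro ⟨v, hv, rfl⟩; exact hv
    · intro hw
      refine ⟨π.symm w, ?_, Equiv.apply_symm_apply π w⟩
      show Sum.inr (π (π.symm w)) ∈ D
      rw [Equiv.apply_symm_apply]; exact hw
  -- A = A1 ∪ A2 dominates G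
  have hAdom : IsDomSet G (A1 ∪ A2) := by
    intro v
    obtain ⟨d, hd, hcase⟩ := hD (Sum.inl v)
    cases d with
    | inl u =>
        rcases hcase with heq | hadj
        · obtain rfl : u = v := Sum.inl.inj heq
          exact ⟨u, Set.mem_union_left _ (show u ∈ A1 from hd), Or.inl rfl⟩
        · exact ⟨u, Set.mem_union_left _ (show u ∈ A1 from hd), Or.inr hadj⟩
    | inr u =>
        rcases hcase with heq | hadj
        · cases heq
        · have hpv : π v = u := hadj
          subst hpv
          exact ⟨v, Set.mem_union_right _ (show v ∈ A2 from hd), Or.inl rfl⟩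
  -- A' = π '' A1 ∪ B2 dominates G
  have hA'dom : IsDomSet G (⇑π '' A1 ∪ B2) := by
    intro w
    obtain ⟨d, hd, hcase⟩ := hD (Sum.inr w)
    cases d with
    | inr u =>
        rcases hcase with heq | hadj
        · obtain rfl : u = w := Sum.inr.inj heq
          exact ⟨u, Set.mem_union_right _ (show u ∈ B2 from hd), Or.inl rfl⟩
        · exact ⟨u, Set.mem_union_right _ (show u ∈ B2 from hd), Or.inr hadj⟩
    | inl u =>
        rcases hcase with heq | hadj
        · cases heq
        · have hpu : π u = w := hadj
          have hu1 : u ∈ A1 := hd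
          have hw1 : w ∈ ⇑π '' A1 := ⟨u, hu1, hpu⟩
          exact ⟨w, Set.mem_union_left _ hw1, Or.inl rfl⟩
  -- cardinality bookkeeping
  have hDeq : D = Sum.inl '' A1 ∪ Sum.inr '' B2 := by
    ext d
    constructor
    · intro hd
      cases d with
      | inl v => exact Or.inl ⟨v, hd, rfl⟩
      | inr v => exact Or.inr ⟨v, hd, rfl⟩
    · rintro (⟨v, hv, rfl⟩ | ⟨v, hv, rfl⟩) <;> exact hv
  have hDn : D.ncard = A1.ncard + B2.ncard := by
    rw [hDeq, Set.ncard_union_eq ?_ (Set.toFinite _) (Set.toFinite _),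
      Set.ncard_image_of_injective _ Sum.inl_injective,
      Set.ncard_image_of_injective _ Sum.inr_injective]
    rw [Set.disjoint_left]
    rintro z ⟨v, _, rfl⟩ ⟨w, _, h⟩
    cases h
  have hA2B2 : A2.ncard = B2.ncard := by
    rw [← hB2img, Set.ncard_image_of_injective _ π.injective]
  have hγA : domNum G ≤ (A1 ∪ A2).ncard := domNum_le_ncard G hAdom
  have hle : (A1 ∪ A2).ncard ≤ A1.ncard + A2.ncard := Set.ncard_union_le _ _
  have hAcard : (A1 ∪ A2).ncard = domNum G := by omega
  have hsum : A1.ncard + A2.ncard = domNum G := by omega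
  have hinter : (A1 ∩ A2).ncard = 0 := by
    have := Set.ncard_union_add_ncard_inter A1 A2 (Set.toFinite _) (Set.toFinite _)
    omega
  have hdisj : Disjoint A1 A2 :=
    Set.disjoint_iff_inter_eq_empty.mpr ((Set.ncard_eq_zero (Set.toFinite _)).mp hinter)
  have hA'img : ⇑π '' (A1 ∪ A2) = ⇑π '' A1 ∪ B2 := by
    rw [Set.image_union, hB2img]
  have hA'card : (⇑π '' A1 ∪ B2).ncard = domNum G := by
    rw [← hA'img, Set.ncard_image_of_injective _ π.injective]; exact hAcard
  have hdisj2 : Disjoint (⇑π '' A1) B2 := by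
    rw [← hB2img]
    exact (Set.disjoint_image_iff π.injective).mpr hdisj
  -- domination of the complements
  have D1 : ∀ v, v ∉ A1 ∪ A2 → ∃ u ∈ A1, G.Adj u v := by
    intro v hv
    obtain ⟨d, hd, hcase⟩ := hD (Sum.inl v)
    cases d with
    | inl u =>
        rcases hcase with heq | hadj
        · obtain rfl : u = v := Sum.inl.inj heq
          exact absurd (Set.mem_union_left _ (show u ∈ A1 from hd)) hv
        · exact ⟨u, show u ∈ A1 from hd, hadj⟩
    | inr u =>
        rcases hcase with heq | hadj
        · cases heq
        · have hpv : π v = u := hadj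
          subst hpv
          exact absurd (Set.mem_union_right _ (show v ∈ A2 from hd)) hv
  have D2 : ∀ w, w ∉ ⇑π '' A1 ∪ B2 → ∃ u ∈ B2, G.Adj u w := by
    intro w hw
    obtain ⟨d, hd, hcase⟩ := hD (Sum.inr w)
    cases d with
    | inr u =>
        rcases hcase with heq | hadj
        · obtain rfl : u = w := Sum.inr.inj heq
          exact absurd (Set.mem_union_right _ (show u ∈ B2 from hd)) hw
        · exact ⟨u, show u ∈ B2 from hd, hadj⟩
    | inl u =>
        rcases hcase with heq | hadj
        · cases heq
        · have hpu : π u = w := hadj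
          have hu1 : u ∈ A1 := hd
          have hw1 : w ∈ ⇑π '' A1 := ⟨u, hu1, hpu⟩
          exact absurd (Set.mem_union_left _ hw1) hw
  -- minimality facts
  have F1 : ∀ a ∈ A2, ∀ b ∈ A1 ∪ A2, ¬ G.Adj b a := by
    intro a ha b hb hadj
    have hdom : IsDomSet G ((A1 ∪ A2) \ {a}) := by
      intro v
      by_cases hvA : v ∈ A1 ∪ A2
      · by_cases hva : v = a
        · subst hva
          exact ⟨b, ⟨hb, fun h => hadj.ne h⟩, Or.inr hadj⟩
        · exact ⟨v, ⟨hvA, fun h => hva h⟩, Or.inl rfl⟩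
      · obtain ⟨u, hu, hadj'⟩ := D1 v hvA
        have hune : u ≠ a := fun h => Set.disjoint_left.mp hdisj hu (h ▸ ha)
        exact ⟨u, ⟨Set.mem_union_left _ hu, fun h => hune h⟩, Or.inr hadj'⟩
    have h1 := domNum_le_ncard G hdom
    have h2 := Set.ncard_diff_singleton_add_one (Set.mem_union_right A1 ha) (Set.toFinite _)
    omega
  have F2 : ∀ b ∈ ⇑π '' A1, ∀ c ∈ ⇑π '' A1 ∪ B2, ¬ G.Adj c b := by
    intro b hb c hc hadj
    have hdom : IsDomSet G ((⇑π '' A1 ∪ B2) \ {b}) := by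
      intro v
      by_cases hvA : v ∈ ⇑π '' A1 ∪ B2
      · by_cases hvb : v = b
        · subst hvb
          exact ⟨c, ⟨hc, fun h => hadj.ne h⟩, Or.inr hadj⟩
        · exact ⟨v, ⟨hvA, fun h => hvb h⟩, Or.inl rfl⟩
      · obtain ⟨u, hu, hadj'⟩ := D2 v hvA
        have hune : u ≠ b := fun h => Set.disjoint_left.mp hdisj2 hb (h ▸ hu)
        exact ⟨u, ⟨Set.mem_union_right _ hu, fun h => hune h⟩, Or.inr hadj'⟩
    have h1 := domNum_le_ncard G hdom
    have h2 := Set.ncard_diff_singleton_add_one hb (Set.toFinite _)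
    have h2' := Set.ncard_diff_singleton_add_one (Set.mem_union_left B2 hb) (Set.toFinite _)
    omega
  -- the case analysis
  by_cases hx1 : x ∈ A1
  · -- Case: x ∈ A1
    by_cases hxA' : x ∈ ⇑π '' A1 ∪ B2
    · rcases hxA' with hxi | hxB2
      · -- x ∈ π '' A1 : contradiction via F2 with c = π x
        have hπxA' : π x ∈ ⇑π '' A1 ∪ B2 := Set.mem_union_left _ ⟨x, hx1, rfl⟩
        have hadj : G.Adj (π x) x := by rw [hπx]; exact hxy1.symm
        exact F2 x hxi (π x) hπxA' hadj
      · -- x ∈ B2 : then xm ∈ A2, but x ~ xm ∈ A2 contradicts F1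
        rw [← hB2img] at hxB2
        obtain ⟨a, ha2, hax⟩ := hxB2
        have : a = xm := hπ_eq_x a hax
        subst this
        exact F1 a ha2 x (Set.mem_union_left _ hx1) hxxm
    · -- x ∉ A' : D2 gives u ∈ B2 adjacent to x; u = π a, a ∈ A2
      obtain ⟨u, huB2, huadj⟩ := D2 x hxA'
      rw [← hB2img] at huB2
      obtain ⟨a, ha2, hau⟩ := huB2
      by_cases hal : a ∈ l
      · rw [hldef, List.mem_cons] at hal
        rcases hal with rfl | hal
        · -- a = x : contradicts disjointness
          exact Set.disjoint_left.mp hdisj hx1 ha2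
        · -- a is a neighbor of x, a ∈ A2 : contradicts F1
          exact F1 a ha2 x (Set.mem_union_left _ hx1) ((hmemtl a).mp hal)
      · -- π a = a = u : u ∈ A2 adjacent to x
        have : u = a := hau.symm.trans (hπfix a hal)
        subst this
        exact F1 u ha2 x (Set.mem_union_left _ hx1) huadj.symm
  · by_cases hx2 : x ∈ A2
    · -- Case: x ∈ A2. Then no neighbor of x is in A; consider y1 = π x.
      have hy1A : y1 ∉ A1 ∪ A2 := fun h => F1 x hx2 y1 h hxy1.symm
      obtain ⟨u, hu1, huadj⟩ := D1 y1 hy1A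
      have hunl : u ∉ l := by
        intro hul
        rw [hldef, List.mem_cons] at hul
        rcases hul with rfl | hul
        · exact Set.disjoint_left.mp hdisj hu1 hx2
        · exact F1 x hx2 u (Set.mem_union_left _ hu1) ((hmemtl u).mp hul).symm
      have huimg : u ∈ ⇑π '' A1 := ⟨u, hu1, hπfix u hunl⟩
      have hy1A' : y1 ∈ ⇑π '' A1 ∪ B2 := by
        rw [← hB2img]
        exact Set.mem_union_right _ ⟨x, hx2, hπx⟩
      exact F2 u huimg y1 hy1A' huadj.symm
    · -- Case: x ∉ A
      have hxA : x ∉ A1 ∪ A2 := by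
        rintro (h | h)
        · exact hx1 h
        · exact hx2 h
      -- some neighbor of x is in A
      obtain ⟨d, hdA, hdcase⟩ := hAdom x
      have hdadj : G.Adj d x := by
        rcases hdcase with rfl | h
        · exact absurd hdA hxA
        · exact h
      -- Step: find b ∈ A, b neighbor of x, b ∉ π '' A
      have step : ∃ b, G.Adj x b ∧ b ∈ A1 ∪ A2 ∧ b ∉ ⇑π '' (A1 ∪ A2) := by
        by_contra hno
        push_neg at hno
        have key : ∀ k : ℕ, (π ^ k) x ∈ l ∧ (π ^ k) x ∉ A1 ∪ A2 := by
          intro k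
          induction k with
          | zero =>
              constructor
              · show (π ^ 0) x ∈ l
                simp only [pow_zero, Equiv.Perm.one_apply]
                exact List.mem_cons_self
              · simp only [pow_zero, Equiv.Perm.one_apply]
                exact hxA
          | succ k ih =>
              have hstep : (π ^ (k + 1)) x = π ((π ^ k) x) := by
                rw [pow_succ' π k]
                rfl
              constructor
              · rw [hstep]; exact hπmem _ ih.1
              · rw [hstep]
                intro hyA
                have hyl : π ((π ^ k) x) ∈ l := hπmem _ ih.1
                rw [hldef, List.mem_cons] at hyl
                rcases hyl with h | h
                · rw [h] at hyA
                  exact hxA hyA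
                · have hadjy : G.Adj x (π ((π ^ k) x)) := (hmemtl _).mp h
                  obtain ⟨a, haA, ha⟩ := hno _ hadjy hyA
                  have : a = (π ^ k) x := π.injective ha
                  subst this
                  exact ih.2 haA
        have hdl : d ∈ l := List.mem_cons_of_mem x ((hmemtl d).mpr hdadj.symm)
        obtain ⟨k, hk⟩ := horbit d hdl
        exact (key k).2 (hk ▸ hdA)
      obtain ⟨b, hxb, hbA, hbnA'⟩ := step
      rw [hA'img] at hbnA'
      obtain ⟨u, huB2, huadjb⟩ := D2 b hbnA'
      rw [← hB2img] at huB2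
      obtain ⟨a, ha2, hau⟩ := huB2
      by_cases hal : a ∈ l
      · rw [hldef, List.mem_cons] at hal
        rcases hal with rfl | hal
        · -- a = x ∈ A2: contradiction
          exact hx2 ha2
        · by_cases haxm : a = xm
          · -- xm ∈ A2: final step
            obtain ⟨u', hu'1, hu'adj⟩ := D1 x hxA
            have hu'tl : u' ∈ y1 :: ns := (hmemtl u').mpr hu'adj.symm
            have hu'ne : u' ≠ a := fun h => Set.disjoint_left.mp hdisj hu'1 (h ▸ ha2)
            have hu'nxm : u' ≠ xm := fun h => hu'ne (h.trans haxm.symm)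
            have hadj2 : G.Adj x (π u') := hπ_tl u' hu'tl hu'nxm
            have hπu'A : π u' ∈ ⇑π '' A1 := ⟨u', hu'1, rfl⟩
            have hπax : π a = x := haxm ▸ hπlast
            have hxA'mem : x ∈ ⇑π '' A1 ∪ B2 := by
              rw [← hB2img]
              exact Set.mem_union_right _ ⟨a, ha2, hπax⟩
            exact F2 (π u') hπu'A x hxA'mem hadj2
          · -- a ≠ xm : π a is a neighbor of x, triangle with b
            have hadjua : G.Adj x u := hau ▸ hπ_tl a hal haxm
            exact htriangleFree u x b hadjua.symm hxb huadjb
      · -- π a = a = u : u ∈ A2 adjacent to b ∈ A: contradicts F1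
        have : u = a := hau.symm.trans (hπfix a hal)
        subst this
        exact F1 u ha2 b hbA huadjb.symm
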